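/- Let A₁,…,Aₙ be a finite set of compatible observables and let ([G_λ])_{λ∈Λ} be a monotonically decreasing net of equivalence classes of joint observables of A₁,…,Aₙ. Then there exists a joint observable G̃ such that G̃ ⪯ G_λ for every λ, and for any observable B, if B ⪯ G_λ for all λ then B ⪯ G̃. -/

import Mathlib

noncomputable section

open scoped BigOperators

variable {H : Type*} [NormedAddCommGroup H] [InnerProductSpace ℂ H] [CompleteSpace H]

/-- A Markov kernel from `Ω₂` to `Ω₁`: nonnegative entries, columns summing to 1. -/
def IsMarkov {Ω₁ Ω₂ : Type*} [Fintype Ω₁] (p : Ω₁ → Ω₂ → ℝ) : Prop :=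
  (∀ x y, 0 ≤ p x y) ∧ ∀ y, ∑ x, p x y = 1

/-- A finite-outcome observable (POVM): positive operators summing to the identity. -/
def IsObservable {Ω : Type*} [Fintype Ω] (A : Ω → H →L[ℂ] H) : Prop :=
  (∀ x, (A x).IsPositive) ∧ ∑ x, A x = 1

/-- Post-processing of `A` by the kernel `p`. -/
def pproc {Ω₁ Ω₂ : Type*} [Fintype Ω₂] (p : Ω₁ → Ω₂ → ℝ) (A : Ω₂ → H →L[ℂ] H) :
    Ω₁ → H →L[ℂ] H := fun x => ∑ y, (p x y : ℂ) • A y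

/-- `A ⪯ B` : `A` is a post-processing of `B`. -/
def PP {Ω₁ Ω₂ : Type*} [Fintype Ω₁] [Fintype Ω₂] (A : Ω₁ → H →L[ℂ] H)
    (B : Ω₂ → H →L[ℂ] H) : Prop := ∃ p, IsMarkov p ∧ A = pproc p B

/-- `G` is a joint observable of the observables `A ℓ`. -/
def IsJoint {n : ℕ} {Ω : Fin n → Type*} [∀ ℓ, Fintype (Ω ℓ)] [∀ ℓ, DecidableEq (Ω ℓ)]
    (A : ∀ ℓ, Ω ℓ → H →L[ℂ] H) (G : (∀ ℓ, Ω ℓ) → H →L[ℂ] H) : Prop :=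
  IsObservable G ∧ ∀ ℓ xℓ, (∑ x : ∀ ℓ, Ω ℓ, if x ℓ = xℓ then G x else 0) = A ℓ xℓ

open Filter Topology

/-- The set of Markov kernels is compact. -/
lemma isCompact_isMarkov {Ω₁ Ω₂ : Type*} [Fintype Ω₁] :
    IsCompact {p : Ω₁ → Ω₂ → ℝ | IsMarkov p} := by
  have hsub : {p : Ω₁ → Ω₂ → ℝ | IsMarkov p} ⊆
      Set.univ.pi fun _ : Ω₁ => Set.univ.pi fun _ : Ω₂ => Set.Icc (0 : ℝ) 1 := by
    intro p hp x _
    intro y _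
    refine ⟨hp.1 x y, ?_⟩
    calc p x y ≤ ∑ x', p x' y :=
          Finset.single_le_sum (fun i _ => hp.1 i y) (Finset.mem_univ x)
      _ = 1 := hp.2 y
  have hcomp : IsCompact (Set.univ.pi fun _ : Ω₁ => Set.univ.pi fun _ : Ω₂ =>
      Set.Icc (0 : ℝ) 1) :=
    isCompact_univ_pi fun _ => isCompact_univ_pi fun _ => isCompact_Icc
  refine hcomp.of_isClosed_subset ?_ hsub
  have : {p : Ω₁ → Ω₂ → ℝ | IsMarkov p} =
      {p : Ω₁ → Ω₂ → ℝ | ∀ x y, 0 ≤ p x y} ∩ {p | ∀ y, ∑ x, p x y = 1} := rfl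
  rw [this]
  refine IsClosed.inter ?_ ?_
  · have : {p : Ω₁ → Ω₂ → ℝ | ∀ x y, 0 ≤ p x y} =
        ⋂ x, ⋂ y, {p : Ω₁ → Ω₂ → ℝ | 0 ≤ p x y} := by
      ext p; simp [Set.mem_iInter]
    rw [this]
    exact isClosed_iInter fun x => isClosed_iInter fun y =>
      isClosed_le continuous_const ((continuous_apply y).comp (continuous_apply x))
  · have : {p : Ω₁ → Ω₂ → ℝ | ∀ y, ∑ x, p x y = 1} =
        ⋂ y, {p : Ω₁ → Ω₂ → ℝ | ∑ x, p x y = 1} := by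
      ext p; simp [Set.mem_iInter]
    rw [this]
    exact isClosed_iInter fun y =>
      isClosed_eq (continuous_finset_sum _ fun x _ =>
        (continuous_apply y).comp (continuous_apply x)) continuous_const

/-- Along an ultrafilter, a family of Markov kernels has a Markov limit. -/
lemma exists_markov_lim {ι Ω₁ Ω₂ : Type*} [Fintype Ω₁] (U : Ultrafilter ι)
    (f : ι → Ω₁ → Ω₂ → ℝ) (hf : ∀ᶠ i in (U : Filter ι), IsMarkov (f i)) :
    ∃ p, IsMarkov p ∧ Tendsto f (U : Filter ι) (𝓝 p) := by
  have hle' : (↑(U.map f) : Filter (Ω₁ → Ω₂ → ℝ)) ≤ 𝓟 {p | IsMarkov p} := by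
    rw [Ultrafilter.coe_map, le_principal_iff, mem_map]
    exact hf
  obtain ⟨p, hp, hle⟩ := isCompact_isMarkov.ultrafilter_le_nhds (U.map f) hle'
  exact ⟨p, hp, by rwa [Tendsto, ← Ultrafilter.coe_map]⟩

/-- Joint continuity of post-processing. -/
lemma tendsto_pproc {ι : Type*} {F : Filter ι} {Ω₁ Ω₂ : Type*} [Fintype Ω₂]
    {pf : ι → Ω₁ → Ω₂ → ℝ} {p : Ω₁ → Ω₂ → ℝ} (hp : Tendsto pf F (𝓝 p))
    {Af : ι → Ω₂ → H →L[ℂ] H} {A : Ω₂ → H →L[ℂ] H} (hA : Tendsto Af F (𝓝 A)) :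
    Tendsto (fun i => pproc (pf i) (Af i)) F (𝓝 (pproc p A)) := by
  rw [tendsto_pi_nhds]
  intro x
  unfold pproc
  apply tendsto_finset_sum
  intro y _
  have h1 : Tendsto (fun i => pf i x y) F (𝓝 (p x y)) :=
    tendsto_pi_nhds.mp (tendsto_pi_nhds.mp hp x) y
  have h2 : Tendsto (fun i => Af i y) F (𝓝 (A y)) := tendsto_pi_nhds.mp hA y
  exact ((Complex.continuous_ofReal.tendsto (p x y)).comp h1).smul h2

/-- Positivity passes to limits. -/
lemma isPositive_of_tendsto {ι : Type*} {F : Filter ι} [F.NeBot]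
    {T : ι → H →L[ℂ] H} {S : H →L[ℂ] H} (hT : Tendsto T F (𝓝 S))
    (h : ∀ᶠ i in F, (T i).IsPositive) : S.IsPositive := by
  constructor
  · have hadj : Tendsto (fun i => star (T i)) F (𝓝 (star S)) :=
      (continuous_star.tendsto S).comp hT
    have heq : (fun i => star (T i)) =ᶠ[F] T := h.mono fun i hi => hi.isSelfAdjoint
    exact ContinuousLinearMap.isSelfAdjoint_iff_isSymmetric.mp (tendsto_nhds_unique (hadj.congr' heq) hT)
  · intro v
    have hc : Continuous fun T : H →L[ℂ] H => T.reApplyInnerSelf v := by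
      simp only [ContinuousLinearMap.reApplyInnerSelf_apply]
      exact RCLike.continuous_re.comp
        (Continuous.inner ((ContinuousLinearMap.apply ℂ H v).continuous) continuous_const)
    exact ge_of_tendsto ((hc.tendsto S).comp hT) (h.mono fun i hi => hi.2 v)

/-- Being an observable passes to limits. -/
lemma isObservable_of_tendsto {ι : Type*} {F : Filter ι} [F.NeBot] {Ω : Type*} [Fintype Ω]
    {T : ι → Ω → H →L[ℂ] H} {S : Ω → H →L[ℂ] H} (hT : Tendsto T F (𝓝 S))
    (h : ∀ᶠ i in F, IsObservable (T i)) : IsObservable S := by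
  constructor
  · intro x
    exact isPositive_of_tendsto (tendsto_pi_nhds.mp hT x) (h.mono fun i hi => hi.1 x)
  · have hsum : Tendsto (fun i => ∑ x, T i x) F (𝓝 (∑ x, S x)) :=
      tendsto_finset_sum _ fun x _ => tendsto_pi_nhds.mp hT x
    have heq : (fun i => ∑ x, T i x) =ᶠ[F] fun _ => (1 : H →L[ℂ] H) :=
      h.mono fun i hi => hi.2
    exact tendsto_nhds_unique (hsum.congr' heq) tendsto_const_nhds

/-- A monotonically decreasing net of joint observables has a lower bound among the
joint observables, which upper bounds every common lower bound. -/
theorem decreasing_net_joint {n : ℕ} {Ω : Fin n → Type*}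
    [∀ ℓ, Fintype (Ω ℓ)] [∀ ℓ, DecidableEq (Ω ℓ)]
    {Λ : Type*} [Preorder Λ] [Nonempty Λ]
    (hdir : ∀ a b : Λ, ∃ c, a ≤ c ∧ b ≤ c)
    (A : ∀ ℓ, Ω ℓ → H →L[ℂ] H)
    (G : Λ → ((∀ ℓ, Ω ℓ) → H →L[ℂ] H))
    (hGj : ∀ l, IsJoint A (G l))
    (hmono : ∀ l l', l ≤ l' → PP (G l') (G l)) :
    ∃ Gt : (∀ ℓ, Ω ℓ) → H →L[ℂ] H, IsJoint A Gt ∧ (∀ l, PP Gt (G l)) ∧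
      ∀ (Ω' : Type) [Fintype Ω'], ∀ B : Ω' → H →L[ℂ] H, IsObservable B →
        (∀ l, PP B (G l)) → PP B Gt := by
  classical
  haveI : IsDirected Λ (· ≤ ·) := ⟨hdir⟩
  haveI : (atTop : Filter Λ).NeBot := atTop_neBot
  set U : Ultrafilter Λ := Ultrafilter.of atTop with hUdef
  have hU : (U : Filter Λ) ≤ atTop := Ultrafilter.of_le _
  haveI : (U : Filter Λ).NeBot := U.neBot
  -- kernels relating `G l` to `G μ` for `μ ≤ l`
  set k : Λ → Λ → ((∀ ℓ, Ω ℓ) → (∀ ℓ, Ω ℓ) → ℝ) := fun μ l =>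
    if h : μ ≤ l then (hmono μ l h).choose else fun _ _ => 0 with hk
  have hkprop : ∀ μ, ∀ᶠ l in (U : Filter Λ),
      IsMarkov (k μ l) ∧ G l = pproc (k μ l) (G μ) := by
    intro μ
    filter_upwards [hU (eventually_ge_atTop μ)] with l hl
    have h := (hmono μ l hl).choose_spec
    simp only [hk, dif_pos hl]
    exact ⟨h.1, h.2⟩
  -- limit kernel from a fixed base point
  obtain ⟨μ₀⟩ := ‹Nonempty Λ›
  obtain ⟨p₀, hp₀, hp₀lim⟩ := exists_markov_lim U (k μ₀)
    ((hkprop μ₀).mono fun l hl => hl.1)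
  refine ⟨pproc p₀ (G μ₀), ?_, ?_, ?_⟩
  all_goals
    have hGlim : Tendsto G (U : Filter Λ) (𝓝 (pproc p₀ (G μ₀))) := by
      have := tendsto_pproc (H := H) hp₀lim (tendsto_const_nhds (x := G μ₀))
      exact this.congr' ((hkprop μ₀).mono fun l hl => hl.2.symm)
  · -- `IsJoint A (pproc p₀ (G μ₀))`
    constructor
    · exact isObservable_of_tendsto hGlim (Eventually.of_forall fun l => (hGj l).1)
    · intro ℓ xℓ
      have hsum : Tendsto (fun l => ∑ x, if x ℓ = xℓ then G l x else 0) (U : Filter Λ)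
          (𝓝 (∑ x, if x ℓ = xℓ then pproc p₀ (G μ₀) x else 0)) := by
        apply tendsto_finset_sum
        intro x _
        by_cases h : x ℓ = xℓ
        · simpa [h] using tendsto_pi_nhds.mp hGlim x
        · simp only [if_neg h]
          exact tendsto_const_nhds
      have heq : (fun l => ∑ x, if x ℓ = xℓ then G l x else 0) =ᶠ[(U : Filter Λ)]
          fun _ => A ℓ xℓ := Eventually.of_forall fun l => (hGj l).2 ℓ xℓ
      exact tendsto_nhds_unique (hsum.congr' heq) tendsto_const_nhds
  · -- lower bound: `pproc p₀ (G μ₀) ⪯ G μ` for all `μ`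
    intro μ
    obtain ⟨q, hq, hqlim⟩ := exists_markov_lim U (k μ) ((hkprop μ).mono fun l hl => hl.1)
    refine ⟨q, hq, ?_⟩
    have h1 : Tendsto (fun l => pproc (k μ l) (G μ)) (U : Filter Λ)
        (𝓝 (pproc q (G μ))) := tendsto_pproc hqlim tendsto_const_nhds
    have h2 : Tendsto G (U : Filter Λ) (𝓝 (pproc q (G μ))) :=
      h1.congr' ((hkprop μ).mono fun l hl => hl.2.symm)
    exact tendsto_nhds_unique hGlim h2
  · -- greatest lower bound property
    intro Ω' _ B _ hB
    set r : Λ → Ω' → (∀ ℓ, Ω ℓ) → ℝ := fun l => (hB l).choose with hr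
    have hrprop : ∀ l, IsMarkov (r l) ∧ B = pproc (r l) (G l) := fun l => (hB l).choose_spec
    obtain ⟨rl, hrl, hrllim⟩ := exists_markov_lim U r
      (Eventually.of_forall fun l => (hrprop l).1)
    refine ⟨rl, hrl, ?_⟩
    have h1 : Tendsto (fun l => pproc (r l) (G l)) (U : Filter Λ)
        (𝓝 (pproc rl (pproc p₀ (G μ₀)))) := tendsto_pproc hrllim hGlim
    have h2 : Tendsto (fun _ : Λ => B) (U : Filter Λ) (𝓝 (pproc rl (pproc p₀ (G μ₀)))) :=
      h1.congr' (Eventually.of_forall fun l => ((hrprop l).2).symm)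
    exact tendsto_nhds_unique tendsto_const_nhds h2
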